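/- arXiv:2111.13524 — 2 statements merged into one kernel-verified Lean document; each statement's English description precedes it below -/
import Mathlib

section
/- Let Σ = {a_1, …, a_k} be a finite alphabet and L a language over Σ. Then L is a commutative group language (commutative and recognized by a permutation DFA) if and only if L is a finite union of languages of the form U_1 ⧢ U_2 ⧢ ⋯ ⧢ U_k, where each U_j consists only of words over the single letter a_j and, viewed as a language over the unary alphabet {a_j}, is a group language. -/
open List

def IsCommutativeLang {α : Type} (L : Language α) : Prop :=
  ∀ u v : List α, u ~ v → (u ∈ L ↔ v ∈ L)

def UpClosure {α : Type} (L : Language α) : Language α :=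
  {v | ∃ u ∈ L, u <+ v}

def DownClosure {α : Type} (L : Language α) : Language α :=
  {u | ∃ v ∈ L, u <+ v}

def UpInterior {α : Type} (L : Language α) : Language α :=
  {w | ∃ U : Language α, (∀ x ∈ U, x ∈ L) ∧ UpClosure U = U ∧ w ∈ U}

def DownInterior {α : Type} (L : Language α) : Language α :=
  {w | ∃ U : Language α, (∀ x ∈ U, x ∈ L) ∧ DownClosure U = U ∧ w ∈ U}

def RecognizedBy {α : Type} (L : Language α) (n : ℕ) : Prop :=
  ∃ (σ : Type) (_ : Fintype σ) (M : DFA α σ), Fintype.card σ = n ∧ M.accepts = L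

noncomputable def sc {α : Type} (L : Language α) : ℕ :=
  sInf {n | RecognizedBy L n}

def Nerode {α : Type} (L : Language α) (u v : List α) : Prop :=
  ∀ x : List α, u ++ x ∈ L ↔ v ++ x ∈ L

inductive IsShuffle {α : Type} : List α → List α → List α → Prop
  | nil : IsShuffle [] [] []
  | left (x : α) {u v w : List α} : IsShuffle u v w → IsShuffle (x :: u) v (x :: w)
  | right (y : α) {u v w : List α} : IsShuffle u v w → IsShuffle u (y :: v) (y :: w)

def Shuffle {α : Type} (U V : Language α) : Language α :=
  {w | ∃ u ∈ U, ∃ v ∈ V, IsShuffle u v w}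

def IsPermDFA {α σ : Type} (M : DFA α σ) : Prop :=
  ∀ a : α, Function.Bijective fun q => M.step q a

def IsGroupLang {α : Type} (L : Language α) : Prop :=
  ∃ (σ : Type) (_ : Fintype σ) (M : DFA α σ), IsPermDFA M ∧ M.accepts = L

def wpow {α : Type} (w : List α) (n : ℕ) : List α :=
  (List.replicate n w).flatten

def IsAperiodicDFA {α σ : Type} (M : DFA α σ) : Prop :=
  ∀ (q : σ) (w : List α) (n : ℕ), 1 ≤ n → M.evalFrom q (wpow w n) = q → M.evalFrom q w = q

def IsAperiodicLang {α : Type} (L : Language α) : Prop :=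
  ∃ (σ : Type) (_ : Fintype σ) (M : DFA α σ), IsAperiodicDFA M ∧ M.accepts = L

def ShuffleList {α : Type} : List (Language α) → Language α
  | [] => {([] : List α)}
  | L :: Ls => Shuffle L (ShuffleList Ls)

def UnaryGroupLang {α : Type} (a : α) (U : Language α) : Prop :=
  (∀ w ∈ U, ∀ x ∈ w, x = a) ∧
  ∃ (σ : Type) (_ : Fintype σ) (M : DFA Unit σ), IsPermDFA M ∧
    ∀ n : ℕ, (List.replicate n a ∈ U ↔ List.replicate n () ∈ M.accepts)

def UnaryAperiodicLang {α : Type} (a : α) (U : Language α) : Prop :=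
  (∀ w ∈ U, ∀ x ∈ w, x = a) ∧
  ∃ (σ : Type) (_ : Fintype σ) (M : DFA Unit σ), IsAperiodicDFA M ∧
    ∀ n : ℕ, (List.replicate n a ∈ U ↔ List.replicate n () ∈ M.accepts)

lemma isShuffle_perm {α : Type} {u v w : List α} (h : IsShuffle u v w) : w ~ u ++ v := by
  induction h with
  | nil => rfl
  | left x h ih => simpa using ih.cons x
  | right y h ih => exact (ih.cons y).trans (List.perm_middle).symm

lemma isShuffle_filter {α : Type} (p : α → Bool) (w : List α) :
    IsShuffle (w.filter p) (w.filter fun x => !p x) w := by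
  induction w with
  | nil => exact .nil
  | cons x t ih =>
    by_cases h : p x = true
    · simpa [List.filter_cons, h] using IsShuffle.left x ih
    · simp only [Bool.not_eq_true] at h
      simpa [List.filter_cons, h] using IsShuffle.right x ih

lemma mem_shuffleList {α : Type} [DecidableEq α] (U : α → Language α) :
    ∀ (as : List α), as.Nodup → (∀ a ∈ as, ∀ w ∈ U a, ∀ x ∈ w, x = a) → ∀ w : List α,
      (w ∈ ShuffleList (as.map U) ↔
        (∀ x ∈ w, x ∈ as) ∧ ∀ a ∈ as, List.replicate (w.count a) a ∈ U a) := by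
  intro as
  induction as with
  | nil =>
    intro _ _ w
    simp only [List.map_nil]
    constructor
    · rintro rfl; simp [ShuffleList]
    · rintro ⟨h1, _⟩
      have : w = [] := by
        cases w with
        | nil => rfl
        | cons x t => exact absurd (h1 x (by simp)) (by simp)
      simp only [this, ShuffleList]; rfl
  | cons a as ih =>
    intro hnd hU w
    have hna : a ∉ as := (List.nodup_cons.mp hnd).1
    have hnd' := (List.nodup_cons.mp hnd).2
    have ih' := ih hnd' (fun b hb => hU b (List.mem_cons_of_mem a hb))
    simp only [List.map_cons, ShuffleList]
    constructor
    · rintro ⟨u, hu, v, hv, hsh⟩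
      have hperm := isShuffle_perm hsh
      have hua : ∀ x ∈ u, x = a := hU a (List.mem_cons_self) u hu
      have hvmem := ((ih' v).mp hv).1
      have hvcount := ((ih' v).mp hv).2
      have hcount : ∀ b, w.count b = u.count b + v.count b := by
        intro b
        rw [List.Perm.count_eq hperm, List.count_append]
      constructor
      · intro x hx
        rcases (List.mem_append.mp (hperm.mem_iff.mp hx)) with h | h
        · rw [hua x h]; exact List.mem_cons_self
        · exact List.mem_cons_of_mem a (hvmem x h)
      · intro b hb
        rcases List.mem_cons.mp hb with rfl | hb'
        · have h1 : u.count b = u.length := by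
            rw [List.count_eq_length]
            intro x hx; exact (hua x hx).symm
          have h2 : v.count b = 0 := by
            rw [List.count_eq_zero]
            intro hbv; exact hna (hvmem b hbv)
          have : w.count b = u.length := by rw [hcount b, h1, h2]; omega
          rw [this]
          have : u = List.replicate u.length b := by
            rw [List.eq_replicate_iff]; exact ⟨rfl, hua⟩
          rwa [← this]
        · have h1 : u.count b = 0 := by
            rw [List.count_eq_zero]
            intro hbu
            exact hna (by rw [← hua b hbu]; exact hb')
          have : w.count b = v.count b := by rw [hcount b, h1, Nat.zero_add]
          rw [this]
          exact hvcount b hb'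
    · rintro ⟨hmem, hcnt⟩
      refine ⟨List.replicate (w.count a) a, hcnt a (List.mem_cons_self),
        w.filter (fun x => !(decide (x = a))), ?_, ?_⟩
      · rw [ih']
        constructor
        · intro x hx
          simp only [List.mem_filter, Bool.not_eq_true', decide_eq_false_iff_not] at hx
          rcases List.mem_cons.mp (hmem x hx.1) with rfl | h
          · exact absurd rfl hx.2
          · exact h
        · intro b hb
          have : (w.filter (fun x => !(decide (x = a)))).count b = w.count b :=
            List.count_filter (by simp; rintro rfl; exact hna hb)
          rw [this]
          exact hcnt b (List.mem_cons_of_mem a hb)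
      · have := isShuffle_filter (fun x => decide (x = a)) w
        rwa [List.filter_eq] at this

def prodDFA {k n : ℕ} (σ : Fin n → Fin k → Type) (M : ∀ i j, DFA Unit (σ i j)) :
    DFA (Fin k) (∀ i j, σ i j) where
  step q a := fun i j => if j = a then (M i j).step (q i j) () else q i j
  start := fun i j => (M i j).start
  accept := {q | ∃ i, ∀ j, q i j ∈ (M i j).accept}

lemma prodDFA_eval {k n : ℕ} (σ : Fin n → Fin k → Type) (M : ∀ i j, DFA Unit (σ i j)) :
    ∀ (w : List (Fin k)) (q : ∀ i j, σ i j) (i : Fin n) (j : Fin k),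
      (prodDFA σ M).evalFrom q w i j
        = (M i j).evalFrom (q i j) (List.replicate (w.count j) ()) := by
  intro w
  induction w with
  | nil => intro q i j; simp [DFA.evalFrom]
  | cons x t ih =>
    intro q i j
    have h1 : (prodDFA σ M).evalFrom q (x :: t)
        = (prodDFA σ M).evalFrom ((prodDFA σ M).step q x) t := rfl
    rw [h1, ih]
    by_cases h : j = x
    · subst h
      have hc : (j :: t).count j = t.count j + 1 := by simp [List.count_cons]
      rw [hc, List.replicate_succ]
      have : ((prodDFA σ M).step q j) i j = (M i j).step (q i j) () := by
        simp [prodDFA]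
      rw [this]
      rfl
    · have hc : (x :: t).count j = t.count j := by simp [List.count_cons, h, Ne.symm h]
      have : ((prodDFA σ M).step q x) i j = q i j := by
        simp [prodDFA, h]
      rw [hc, this]

lemma prodDFA_perm {k n : ℕ} (σ : Fin n → Fin k → Type) (M : ∀ i j, DFA Unit (σ i j))
    (h : ∀ i j, IsPermDFA (M i j)) : IsPermDFA (prodDFA σ M) := by
  intro a
  have e : ∀ i j, σ i j ≃ σ i j := fun i j => Equiv.ofBijective _ (h i j ())
  refine Function.bijective_iff_has_inverse.mpr
    ⟨fun q i j => if j = a then (Equiv.ofBijective _ (h i j ())).symm (q i j) else q i j, ?_, ?_⟩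
  · intro q; funext i j
    by_cases hj : j = a
    · simp only [prodDFA, hj, if_pos]
      exact Equiv.ofBijective_symm_apply_apply _ (h i j ()) _
    · simp [prodDFA, hj]
  · intro q; funext i j
    by_cases hj : j = a
    · simp only [prodDFA, hj, if_pos]
      exact Equiv.ofBijective_apply_symm_apply _ (h i j ()) _
    · simp [prodDFA, hj]

lemma mem_shuffle_union {k n : ℕ} (U : Fin n → Fin k → Language (Fin k))
    (hU : ∀ i j, ∀ w ∈ U i j, ∀ x ∈ w, x = j) (w : List (Fin k)) :
    (w ∈ ⋃ i, ShuffleList ((List.finRange k).map (U i)) ↔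
      ∃ i, ∀ j, List.replicate (w.count j) j ∈ U i j) := by
  refine (Set.mem_iUnion (s := fun i => (ShuffleList ((List.finRange k).map (U i)) : Set (List (Fin k))))).trans ?_
  constructor
  · rintro ⟨i, hi⟩
    exact ⟨i, fun j => ((mem_shuffleList (U i) (List.finRange k) (List.nodup_finRange k)
      (fun a _ => hU i a) w).mp hi).2 j (List.mem_finRange j)⟩
  · rintro ⟨i, hi⟩
    exact ⟨i, (mem_shuffleList (U i) (List.finRange k) (List.nodup_finRange k)
      (fun a _ => hU i a) w).mpr ⟨fun x _ => List.mem_finRange x, fun a _ => hi a⟩⟩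

lemma backward_dir (k n : ℕ) (U : Fin n → Fin k → Language (Fin k))
    (hU : ∀ i j, UnaryGroupLang j (U i j)) :
    IsCommutativeLang (⋃ i, ShuffleList ((List.finRange k).map (U i))) ∧
    IsGroupLang (⋃ i, ShuffleList ((List.finRange k).map (U i))) := by
  have hchar := mem_shuffle_union U (fun i j => (hU i j).1)
  constructor
  · intro u v huv
    refine (hchar u).trans (Iff.trans ?_ (hchar v).symm)
    exact exists_congr fun i => forall_congr' fun j => by rw [huv.count_eq]
  · choose σ fσ M hperm hiff using fun i j => (hU i j).2
    letI : ∀ i j, Fintype (σ i j) := fσ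
    refine ⟨_, inferInstance, prodDFA σ M, prodDFA_perm σ M hperm, ?_⟩
    ext w
    rw [DFA.mem_accepts]
    refine Iff.trans ?_ (hchar w).symm
    have heval : ∀ i j, (prodDFA σ M).eval w i j
        = (M i j).evalFrom (M i j).start (List.replicate (w.count j) ()) := by
      intro i j
      exact prodDFA_eval σ M w (prodDFA σ M).start i j
    constructor
    · rintro ⟨i, hi⟩
      refine ⟨i, fun j => ?_⟩
      rw [hiff i j, DFA.mem_accepts]
      have := hi j
      rwa [heval i j] at this
    · rintro ⟨i, hi⟩
      refine ⟨i, fun j => ?_⟩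
      rw [heval i j]
      have := (hiff i j (w.count j)).mp (hi j)
      rwa [DFA.mem_accepts] at this

def wordOf {k : ℕ} (c : Fin k → ℕ) : List (Fin k) :=
  ((List.finRange k).map fun j => List.replicate (c j) j).flatten

lemma count_flat {k : ℕ} (c : Fin k → ℕ) (b : Fin k) :
    ∀ (as : List (Fin k)), as.Nodup →
      ((as.map fun j => List.replicate (c j) j).flatten).count b
        = if b ∈ as then c b else 0 := by
  intro as
  induction as with
  | nil => simp
  | cons a as ih =>
    intro hnd
    have hna : a ∉ as := (List.nodup_cons.mp hnd).1
    rw [List.map_cons, List.flatten_cons, List.count_append, ih (List.nodup_cons.mp hnd).2,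
      List.count_replicate]
    by_cases hba : a = b
    · subst hba
      simp [hna]
    · simp [hba, Ne.symm hba, List.mem_cons]

lemma count_wordOf {k : ℕ} (c : Fin k → ℕ) (b : Fin k) : (wordOf c).count b = c b := by
  rw [wordOf, count_flat c b (List.finRange k) (List.nodup_finRange k)]
  simp [List.mem_finRange]

lemma perm_wordOf {k : ℕ} (w : List (Fin k)) : w ~ wordOf (fun j => w.count j) := by
  rw [List.perm_iff_count]
  intro b
  rw [count_wordOf]

lemma evalFrom_replicate {k : ℕ} {σ : Type} (M : DFA (Fin k) σ) (h : IsPermDFA M)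
    (j : Fin k) : ∀ (cn : ℕ) (q : σ),
      M.evalFrom q (List.replicate cn j) = ((Equiv.ofBijective _ (h j)) ^ cn) q := by
  intro cn
  induction cn with
  | zero => intro q; simp [DFA.evalFrom]
  | succ m ih =>
    intro q
    rw [List.replicate_succ]
    have h1 : M.evalFrom q (j :: List.replicate m j)
        = M.evalFrom (M.step q j) (List.replicate m j) := rfl
    rw [h1, ih, pow_succ]
    rfl

lemma eval_wordOf_mod {k : ℕ} {σ : Type} [Fintype σ] (M : DFA (Fin k) σ) (h : IsPermDFA M)
    (c : Fin k → ℕ) :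
    ∀ (as : List (Fin k)) (q : σ),
      M.evalFrom q ((as.map fun j => List.replicate (c j) j).flatten)
        = M.evalFrom q ((as.map fun j =>
            List.replicate (c j % orderOf (Equiv.ofBijective _ (h j))) j).flatten) := by
  intro as
  induction as with
  | nil => intro q; rfl
  | cons a as ih =>
    intro q
    rw [List.map_cons, List.flatten_cons, DFA.evalFrom_of_append,
      List.map_cons, List.flatten_cons, DFA.evalFrom_of_append,
      evalFrom_replicate M h a, evalFrom_replicate M h a, pow_mod_orderOf, ih]

def cycDFA (m : ℕ) (r : ℕ) : DFA Unit (ZMod m) where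
  step q _ := q + 1
  start := 0
  accept := {q | q = (r : ZMod m)}

lemma cycDFA_eval (m r : ℕ) : ∀ (nn : ℕ) (q : ZMod m),
    (cycDFA m r).evalFrom q (List.replicate nn ()) = q + (nn : ZMod m) := by
  intro nn
  induction nn with
  | zero => intro q; simp [DFA.evalFrom]
  | succ t ih =>
    intro q
    rw [List.replicate_succ]
    have h1 : (cycDFA m r).evalFrom q (() :: List.replicate t ())
        = (cycDFA m r).evalFrom (q + 1) (List.replicate t ()) := rfl
    rw [h1, ih]
    push_cast
    ring

lemma cycDFA_perm (m r : ℕ) : IsPermDFA (cycDFA m r) := by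
  intro _
  exact (Equiv.addRight (1 : ZMod m)).bijective

lemma cycDFA_accepts (m r : ℕ) (nn : ℕ) :
    List.replicate nn () ∈ (cycDFA m r).accepts ↔ (nn : ZMod m) = (r : ZMod m) := by
  rw [DFA.mem_accepts]
  show (cycDFA m r).evalFrom (cycDFA m r).start _ ∈ _ ↔ _
  rw [cycDFA_eval]
  show (0 : ZMod m) + nn = (r : ZMod m) ↔ _
  rw [zero_add]

lemma forward_dir (k : ℕ) (L : Language (Fin k)) (hc : IsCommutativeLang L)
    (hg : IsGroupLang L) :
    ∃ (n : ℕ) (U : Fin n → Fin k → Language (Fin k)),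
      (∀ i j, UnaryGroupLang j (U i j)) ∧
      L = ⋃ i : Fin n, ShuffleList ((List.finRange k).map (U i)) := by
  classical
  obtain ⟨σ, fσ, M, hperm, rfl⟩ := hg
  letI := fσ
  let m : Fin k → ℕ := fun j => orderOf (Equiv.ofBijective _ (hperm j))
  have hm : ∀ j, 0 < m j := fun j => orderOf_pos _
  let P : (Fin k → ℕ) → Prop := fun c => wordOf c ∈ M.accepts
  have hPmod : ∀ c : Fin k → ℕ, (P c ↔ P fun j => c j % m j) := by
    intro c
    have hev := eval_wordOf_mod M hperm c (List.finRange k) M.start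
    show wordOf c ∈ M.accepts ↔ wordOf _ ∈ M.accepts
    rw [DFA.mem_accepts, DFA.mem_accepts]
    show M.evalFrom M.start
        (((List.finRange k).map fun j => List.replicate (c j) j).flatten) ∈ M.accept ↔
      M.evalFrom M.start
        (((List.finRange k).map fun j => List.replicate (c j % m j) j).flatten) ∈ M.accept
    rw [hev]
  have hwP : ∀ w : List (Fin k), (w ∈ M.accepts ↔ P fun j => w.count j) :=
    fun w => hc w _ (perm_wordOf w)
  let I := {r : ∀ j, Fin (m j) // P fun j => (r j : ℕ)}
  let n := Fintype.card I
  let e : Fin n ≃ I := (Fintype.equivFin I).symm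
  refine ⟨n, fun i j =>
    {w | ∃ cc : ℕ, cc % m j = ((e i).1 j : ℕ) ∧ w = List.replicate cc j}, ?_, ?_⟩
  · intro i j
    constructor
    · rintro w ⟨cc, _, rfl⟩ x hx
      exact List.eq_of_mem_replicate hx
    · haveI : NeZero (m j) := ⟨(hm j).ne'⟩
      refine ⟨ZMod (m j), inferInstance, cycDFA (m j) ((e i).1 j), cycDFA_perm _ _, ?_⟩
      intro nn
      rw [cycDFA_accepts]
      constructor
      · rintro ⟨cc, hcc, hrep⟩
        have hnc : nn = cc := by
          have := congrArg List.length hrep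
          simpa using this
        subst hnc
        rw [ZMod.natCast_eq_natCast_iff]
        show nn % m j = ((e i).1 j : ℕ) % m j
        rw [Nat.mod_eq_of_lt ((e i).1 j).isLt]
        exact hcc
      · intro h
        refine ⟨nn, ?_, rfl⟩
        rw [ZMod.natCast_eq_natCast_iff] at h
        have h2 : nn % m j = ((e i).1 j : ℕ) % m j := h
        rwa [Nat.mod_eq_of_lt ((e i).1 j).isLt] at h2
  · ext w
    refine Iff.trans ?_ (mem_shuffle_union (U := fun i j =>
      {w | ∃ cc : ℕ, cc % m j = ((e i).1 j : ℕ) ∧ w = List.replicate cc j}) (fun i j w hw x hx => by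
      obtain ⟨cc, _, rfl⟩ := hw; exact List.eq_of_mem_replicate hx) w).symm
    rw [hwP w]
    constructor
    · intro hP
      have hP' : P fun j => w.count j % m j := (hPmod _).mp hP
      have hr : P fun j => (((fun j => (⟨w.count j % m j, Nat.mod_lt _ (hm j)⟩ :
          Fin (m j))) j : Fin (m j)) : ℕ) := hP'
      refine ⟨e.symm ⟨fun j => ⟨w.count j % m j, Nat.mod_lt _ (hm j)⟩, hr⟩,
        fun j => ⟨w.count j, ?_, rfl⟩⟩
      rw [Equiv.apply_symm_apply]
    · rintro ⟨i, hi⟩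
      have hcnt : ∀ j, w.count j % m j = ((e i).1 j : ℕ) := by
        intro j
        obtain ⟨cc, hcc, hrep⟩ := hi j
        have hnc : w.count j = cc := by
          have := congrArg List.length hrep; simpa using this
        rw [hnc]; exact hcc
      rw [hPmod]
      have heq : (fun j => w.count j % m j) = fun j => ((e i).1 j : ℕ) := funext hcnt
      rw [heq]
      exact (e i).2

/-- a language over `Σ = {a_1, …, a_k}` is a commutative group language
iff it is a finite union of shuffles `U_1 ⧢ ⋯ ⧢ U_k` of unary group languages,
where `U_j` uses only the letter `a_j`. -/
theorem commutative_group_lang_normal_form (k : ℕ) (L : Language (Fin k)) :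
    (IsCommutativeLang L ∧ IsGroupLang L) ↔
    ∃ (n : ℕ) (U : Fin n → Fin k → Language (Fin k)),
      (∀ i j, UnaryGroupLang j (U i j)) ∧
      L = ⋃ i : Fin n, ShuffleList ((List.finRange k).map (U i)) := by
  constructor
  · rintro ⟨hc, hg⟩
    exact forward_dir k L hc hg
  · rintro ⟨n, U, hU, rfl⟩
    exact backward_dir k n U hU
end

section
/- Let Σ = {a_1, …, a_k} be a finite alphabet and L a language over Σ. Then L is a commutative aperiodic language (commutative and recognized by an aperiodic DFA) if and only if L is a finite union of languages of the form U_1 ⧢ U_2 ⧢ ⋯ ⧢ U_k, where each U_j consists only of words over the single letter a_j and, viewed as a language over the unary alphabet {a_j}, is an aperiodic language. -/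
open List

/-! ### Auxiliary lemmas -/

section Aux

variable {α : Type} [DecidableEq α]

lemma isShuffle_replicate_filter (a : α) (w : List α) :
    IsShuffle (replicate (w.count a) a) (w.filter (· ≠ a)) w := by
  induction w with
  | nil => simpa using IsShuffle.nil
  | cons x w ih =>
    by_cases hx : x = a
    · subst hx
      rw [List.count_cons_self, List.replicate_succ]
      have : (x :: w).filter (· ≠ x) = w.filter (· ≠ x) := by simp
      rw [this]
      exact IsShuffle.left x ih
    · rw [List.count_cons_of_ne hx]
      have : (x :: w).filter (· ≠ a) = x :: w.filter (· ≠ a) := by simp [hx]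
      rw [this]
      exact IsShuffle.right x ih

lemma shuffleList_mem_iff (l : List α) (U : α → Language α) (hnd : l.Nodup)
    (hU : ∀ a ∈ l, ∀ w ∈ U a, ∀ x ∈ w, x = a) (w : List α) :
    w ∈ ShuffleList (l.map U) ↔ (∀ x ∈ w, x ∈ l) ∧ ∀ a ∈ l, replicate (w.count a) a ∈ U a := by
  induction l generalizing w with
  | nil =>
    simp only [List.map_nil]
    constructor
    · rintro rfl; exact ⟨by simp, by simp⟩
    · rintro ⟨h1, -⟩
      have : w = [] := by
        cases w with
        | nil => rfl
        | cons x w => exact absurd (h1 x (by simp)) (by simp)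
      subst this; rfl
  | cons a l ih =>
    have hal : a ∉ l := (List.nodup_cons.mp hnd).1
    have hnd' := (List.nodup_cons.mp hnd).2
    simp only [List.map_cons]
    constructor
    · rintro ⟨u, hu, v, hv, hsh⟩
      have hua : ∀ x ∈ u, x = a := hU a (by simp) u hu
      have hv' := (ih hnd' (fun b hb => hU b (by simp [hb])) v).mp hv
      have hperm := isShuffle_perm hsh
      have hcount : ∀ b, w.count b = u.count b + v.count b := by
        intro b; rw [hperm.count_eq b, List.count_append]
      have hva : a ∉ v := fun hmem => hal (hv'.1 a hmem)
      have hu_eq : u = replicate u.length a := List.eq_replicate_length.mpr hua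
      constructor
      · intro x hx
        rcases (List.mem_append.mp (hperm.mem_iff.mp hx)) with h | h
        · simp [hua x h]
        · exact List.mem_cons_of_mem a (hv'.1 x h)
      · intro b hb
        rcases List.mem_cons.mp hb with rfl | hb'
        · have : w.count b = u.length := by
            rw [hcount b, List.count_eq_zero_of_not_mem hva, hu_eq]
            simp
          rw [this, ← hu_eq]; exact hu
        · have hba : b ≠ a := fun h => hal (h ▸ hb')
          have : w.count b = v.count b := by
            rw [hcount b, hu_eq, List.count_replicate]
            simp [hba.symm]
          rw [this]; exact hv'.2 b hb'
    · rintro ⟨h1, h2⟩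
      refine ⟨replicate (w.count a) a, h2 a (by simp), w.filter (· ≠ a), ?_,
        isShuffle_replicate_filter a w⟩
      apply (ih hnd' (fun b hb => hU b (by simp [hb])) _).mpr
      constructor
      · intro x hx
        have hxw := List.mem_of_mem_filter hx
        have hxa : x ≠ a := by simpa using (List.of_mem_filter hx)
        rcases List.mem_cons.mp (h1 x hxw) with h | h
        · exact absurd h hxa
        · exact h
      · intro b hb
        have hba : b ≠ a := fun h => hal (h ▸ hb)
        have : (w.filter (· ≠ a)).count b = w.count b := by
          apply List.count_filter
          simp [hba]
        rw [this]
        exact h2 b (by simp [hb])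

lemma wpow_succ' (w : List α) (n : ℕ) : wpow w (n+1) = w ++ wpow w n := by
  simp [wpow, List.replicate_succ]

lemma count_wpow (w : List α) (n : ℕ) (a : α) :
    (wpow w n).count a = n * w.count a := by
  induction n with
  | zero => simp [wpow]
  | succ n ih => rw [wpow_succ', List.count_append, ih]; ring

lemma length_wpow (w : List α) (n : ℕ) : (wpow w n).length = n * w.length := by
  induction n with
  | zero => simp [wpow]
  | succ m ih => rw [wpow_succ', List.length_append, ih]; ring

lemma wpow_singleton (a : α) (n : ℕ) : wpow [a] n = replicate n a := by
  induction n with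
  | zero => rfl
  | succ n ih => rw [wpow_succ', ih, List.replicate_succ]; rfl

lemma evalFrom_replicate_s6 {σ : Type} (M : DFA α σ) (q : σ) (a : α) (n : ℕ) :
    M.evalFrom q (replicate n a) = (fun s => M.step s a)^[n] q := by
  induction n generalizing q with
  | zero => rfl
  | succ n ih =>
    rw [List.replicate_succ, Function.iterate_succ_apply]
    exact ih (M.step q a)

lemma aperiodic_iterate_stab {σ : Type} [Fintype σ] (f : σ → σ)
    (hf : ∀ (q : σ) (n : ℕ), 1 ≤ n → f^[n] q = q → f q = q) :
    ∀ m, Fintype.card σ ≤ m → f^[m] = f^[Fintype.card σ] := by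
  set N := Fintype.card σ with hN
  have key : ∀ q : σ, f (f^[N] q) = f^[N] q := by
    intro q
    obtain ⟨i, j, hij, heq⟩ := Fintype.exists_ne_map_eq_of_card_lt
      (fun i : Fin (N+1) => f^[(i : ℕ)] q) (by simp [hN])
    wlog hlt : (i : ℕ) < (j : ℕ) generalizing i j
    · have hij' : (i:ℕ) ≠ (j:ℕ) := fun e => hij (Fin.ext e)
      exact this j i hij.symm heq.symm (by omega)
    · have hr : f^[(j : ℕ) - (i : ℕ)] (f^[(i : ℕ)] q) = f^[(i : ℕ)] q := by
        rw [← Function.iterate_add_apply]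
        have : (j : ℕ) - (i : ℕ) + (i : ℕ) = (j : ℕ) := by omega
        rw [this, ← heq]
      have hfix : f (f^[(i:ℕ)] q) = f^[(i:ℕ)] q := hf _ _ (by omega) hr
      have hfixiter : ∀ m, f^[m] (f^[(i:ℕ)] q) = f^[(i:ℕ)] q := by
        intro m
        induction m with
        | zero => rfl
        | succ m ihm => rw [Function.iterate_succ_apply', ihm, hfix]
      have hNi : f^[N] q = f^[(i:ℕ)] q := by
        have h3 : f^[N - (i:ℕ)] (f^[(i:ℕ)] q) = f^[(i:ℕ)] q := hfixiter _
        rw [← Function.iterate_add_apply] at h3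
        have h2 : N - (i:ℕ) + (i:ℕ) = N := by omega
        rwa [h2] at h3
      rw [hNi, hfix]
  intro m hm
  induction m with
  | zero => have h0 : N = 0 := Nat.le_zero.mp hm; rw [h0]
  | succ m ihm =>
    rcases Nat.lt_or_ge N (m+1) with h | h
    · have := ihm (by omega)
      funext q
      rw [Function.iterate_succ_apply', this, key]
    · have : N = m + 1 := by omega
      rw [this]

end Aux

/-! ### Canonical words -/

def canonL {k : ℕ} (l : List (Fin k)) (c : Fin k → ℕ) : List (Fin k) :=
  (l.map (fun j => replicate (c j) j)).flatten

def canon {k : ℕ} (c : Fin k → ℕ) : List (Fin k) := canonL (List.finRange k) c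

lemma canonL_cons {k : ℕ} (a : Fin k) (l : List (Fin k)) (c : Fin k → ℕ) :
    canonL (a :: l) c = replicate (c a) a ++ canonL l c := by
  simp [canonL]

lemma count_canonL {k : ℕ} (l : List (Fin k)) (c : Fin k → ℕ) (b : Fin k)
    (hnd : l.Nodup) (hb : b ∈ l) : (canonL l c).count b = c b := by
  induction l with
  | nil => cases hb
  | cons a l ih =>
    rw [canonL_cons, List.count_append]
    rcases List.mem_cons.mp hb with rfl | hb'
    · have : (canonL l c).count b = 0 := by
        apply List.count_eq_zero_of_not_mem
        intro hmem
        obtain ⟨u, hu, hmemu⟩ := List.mem_flatten.mp hmem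
        obtain ⟨j, hj, rfl⟩ := List.mem_map.mp hu
        have := List.eq_of_mem_replicate hmemu
        exact (List.nodup_cons.mp hnd).1 (this ▸ hj)
      rw [this, List.count_replicate]
      simp
    · have hba : a ≠ b := fun h => (List.nodup_cons.mp hnd).1 (h ▸ hb')
      rw [List.count_replicate, if_neg (by simp [hba]), ih (List.nodup_cons.mp hnd).2 hb']
      simp

lemma count_canon {k : ℕ} (c : Fin k → ℕ) (b : Fin k) : (canon c).count b = c b :=
  count_canonL _ _ _ (List.nodup_finRange k) (List.mem_finRange b)

/-! ### Cap DFAs -/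

def uCapDFA (N : ℕ) (A : Set ℕ) : DFA Unit (Fin (N+1)) where
  step s _ := ⟨min ((s : ℕ) + 1) N, by omega⟩
  start := ⟨0, by omega⟩
  accept := {s | (s : ℕ) ∈ A}

lemma uCapDFA_evalFrom (N : ℕ) (A : Set ℕ) (s : Fin (N+1)) (w : List Unit) :
    ((uCapDFA N A).evalFrom s w : ℕ) = min ((s : ℕ) + w.length) N := by
  induction w generalizing s with
  | nil => simp [DFA.evalFrom]; omega
  | cons x w ih =>
    have h1 : (uCapDFA N A).evalFrom s (x :: w)
        = (uCapDFA N A).evalFrom ((uCapDFA N A).step s x) w := rfl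
    rw [h1, ih]
    have hs : ((uCapDFA N A).step s x : ℕ) = min ((s:ℕ)+1) N := rfl
    rw [hs]
    simp only [List.length_cons]
    omega

lemma uCapDFA_aperiodic (N : ℕ) (A : Set ℕ) : IsAperiodicDFA (uCapDFA N A) := by
  intro q w n hn h
  have hq : (q : ℕ) ≤ N := by omega
  apply Fin.ext
  rw [uCapDFA_evalFrom]
  have h2 : min ((q:ℕ) + n * w.length) N = (q:ℕ) := by
    have h' := congrArg Fin.val h
    rwa [uCapDFA_evalFrom, length_wpow] at h'
  rcases Nat.eq_zero_or_pos w.length with h0 | h0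
  · rw [h0]; omega
  · have : 1 ≤ n * w.length := Nat.one_le_iff_ne_zero.mpr (by positivity)
    omega

lemma uCapDFA_accepts (N : ℕ) (A : Set ℕ) (n : ℕ) :
    replicate n () ∈ (uCapDFA N A).accepts ↔ min n N ∈ A := by
  rw [DFA.mem_accepts]
  have hv : ((uCapDFA N A).eval (replicate n ()) : ℕ) = min n N := by
    have h := uCapDFA_evalFrom N A (uCapDFA N A).start (replicate n ())
    have h0 : (((uCapDFA N A).start) : ℕ) = 0 := rfl
    rw [h0] at h
    simpa [DFA.eval] using h
  constructor
  · intro h; rwa [← hv]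
  · intro h; show ((uCapDFA N A).eval _ : ℕ) ∈ A; rwa [hv]

def capDFA (k T : ℕ) (A : Set (Fin k → ℕ)) : DFA (Fin k) (Fin k → Fin (T+1)) where
  step s a := Function.update s a ⟨min ((s a : ℕ) + 1) T, by omega⟩
  start := fun _ => ⟨0, by omega⟩
  accept := {s | (fun j => ((s j : ℕ))) ∈ A}

lemma capDFA_evalFrom (k T : ℕ) (A : Set (Fin k → ℕ)) (s : Fin k → Fin (T+1))
    (w : List (Fin k)) (j : Fin k) :
    (((capDFA k T A).evalFrom s w) j : ℕ) = min ((s j : ℕ) + w.count j) T := by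
  induction w generalizing s with
  | nil => simp [DFA.evalFrom]; omega
  | cons x w ih =>
    have h1 : (capDFA k T A).evalFrom s (x :: w)
        = (capDFA k T A).evalFrom ((capDFA k T A).step s x) w := rfl
    rw [h1, ih]
    by_cases hx : j = x
    · subst hx
      have hs : (((capDFA k T A).step s j) j : ℕ) = min ((s j : ℕ) + 1) T := by
        show ((Function.update s j _) j : ℕ) = _
        rw [Function.update_self]
      rw [hs, List.count_cons_self]
      omega
    · have hs : ((capDFA k T A).step s x) j = s j := by
        show (Function.update s x _) j = s j
        rw [Function.update_of_ne hx]
      rw [hs, List.count_cons_of_ne (Ne.symm hx)]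

lemma capDFA_aperiodic (k T : ℕ) (A : Set (Fin k → ℕ)) : IsAperiodicDFA (capDFA k T A) := by
  intro q w n hn h
  funext j
  apply Fin.ext
  rw [capDFA_evalFrom]
  have hq : (q j : ℕ) ≤ T := by omega
  have h2 : min ((q j : ℕ) + n * w.count j) T = (q j : ℕ) := by
    have h' := congrArg (fun s => ((s j : Fin (T+1)) : ℕ)) h
    beta_reduce at h'
    rwa [capDFA_evalFrom, count_wpow] at h'
  rcases Nat.eq_zero_or_pos (w.count j) with h0 | h0
  · rw [h0]; omega
  · have : 1 ≤ n * w.count j := Nat.one_le_iff_ne_zero.mpr (by positivity)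
    omega

lemma capDFA_accepts (k T : ℕ) (A : Set (Fin k → ℕ)) (w : List (Fin k)) :
    w ∈ (capDFA k T A).accepts ↔ (fun j => min (w.count j) T) ∈ A := by
  rw [DFA.mem_accepts]
  have heval : ∀ j, (((capDFA k T A).eval w) j : ℕ) = min (w.count j) T := by
    intro j
    have h := capDFA_evalFrom k T A (capDFA k T A).start w j
    have h0 : (((capDFA k T A).start j) : ℕ) = 0 := rfl
    rw [h0] at h
    simpa [DFA.eval] using h
  have hfun : (fun j => (((capDFA k T A).eval w) j : ℕ)) = fun j => min (w.count j) T :=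
    funext heval
  show (fun j => (((capDFA k T A).eval w) j : ℕ)) ∈ A ↔ _
  rw [hfun]

/-! ### Eventual constancy of unary aperiodic languages -/

lemma unary_eventually_const {α : Type} {a : α} {U : Language α}
    (h : UnaryAperiodicLang a U) :
    ∃ t, ∀ m, t ≤ m → (replicate m a ∈ U ↔ replicate t a ∈ U) := by
  obtain ⟨-, σ, inst, M, hap, hiff⟩ := h
  refine ⟨Fintype.card σ, fun m hm => ?_⟩
  rw [hiff, hiff, DFA.mem_accepts, DFA.mem_accepts]
  have heval : ∀ p, M.eval (replicate p ()) = (fun s => M.step s ())^[p] M.start := by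
    intro p
    show M.evalFrom M.start _ = _
    rw [evalFrom_replicate_s6]
  rw [heval, heval]
  have hf : ∀ (q : σ) (p : ℕ), 1 ≤ p →
      (fun s => M.step s ())^[p] q = q → (fun s => M.step s ()) q = q := by
    intro q p hp hpq
    have h1 : M.evalFrom q (wpow [()] p) = q := by
      rw [wpow_singleton, evalFrom_replicate_s6]; exact hpq
    have := hap q [()] p hp h1
    simpa [DFA.evalFrom] using this
  rw [aperiodic_iterate_stab _ hf m hm]

/-! ### Capping counts in an aperiodic DFA -/

lemma evalFrom_canonL_cap {k : ℕ} {σ : Type} [Fintype σ] (M : DFA (Fin k) σ)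
    (hM : IsAperiodicDFA M) (l : List (Fin k)) (c : Fin k → ℕ) (q : σ) :
    M.evalFrom q (canonL l c)
      = M.evalFrom q (canonL l (fun j => min (c j) (Fintype.card σ))) := by
  set N := Fintype.card σ with hN
  induction l generalizing q with
  | nil => rfl
  | cons a l ih =>
    rw [canonL_cons, canonL_cons, DFA.evalFrom_of_append, DFA.evalFrom_of_append]
    have hf : ∀ (s : σ) (p : ℕ), 1 ≤ p →
        (fun s => M.step s a)^[p] s = s → (fun s => M.step s a) s = s := by
      intro s p hp hpq
      have h1 : M.evalFrom s (wpow [a] p) = s := by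
        rw [wpow_singleton, evalFrom_replicate_s6]; exact hpq
      have := hM s [a] p hp h1
      simpa [DFA.evalFrom] using this
    have hblock : M.evalFrom q (replicate (c a) a)
        = M.evalFrom q (replicate (min (c a) N) a) := by
      rcases le_or_gt N (c a) with hle | hlt
      · rw [evalFrom_replicate_s6, evalFrom_replicate_s6,
          aperiodic_iterate_stab _ hf (c a) hle]
        have : min (c a) N = N := by omega
        rw [this]
      · have : min (c a) N = c a := by omega
        rw [this]
    rw [hblock]
    exact ih _


/-- a language over `Σ = {a_1, …, a_k}` is a commutative aperiodic
language iff it is a finite union of shuffles `U_1 ⧢ ⋯ ⧢ U_k` of unary aperiodic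
languages, where `U_j` uses only the letter `a_j`. -/
theorem commutative_aperiodic_lang_normal_form (k : ℕ) (L : Language (Fin k)) :
    (IsCommutativeLang L ∧ IsAperiodicLang L) ↔
    ∃ (n : ℕ) (U : Fin n → Fin k → Language (Fin k)),
      (∀ i j, UnaryAperiodicLang j (U i j)) ∧
      L = ⋃ i : Fin n, ShuffleList ((List.finRange k).map (U i)) := by
  constructor
  · rintro ⟨hcomm, σ, instσ, M, hap, hacc⟩
    classical
    set N := Fintype.card σ with hN
    have hmemc : ∀ w : List (Fin k), w ∈ L ↔ canon (fun j => w.count j) ∈ L := by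
      intro w
      apply hcomm
      rw [List.perm_iff_count]
      intro b
      rw [count_canon]
    have hcap : ∀ c : Fin k → ℕ, canon c ∈ L ↔ canon (fun j => min (c j) N) ∈ L := by
      intro c
      rw [← hacc, DFA.mem_accepts, DFA.mem_accepts]
      show M.evalFrom M.start (canonL _ c) ∈ M.accept ↔
        M.evalFrom M.start (canonL _ _) ∈ M.accept
      rw [evalFrom_canonL_cap M hap]
    -- index type: capped count vectors whose canonical word lies in L
    let S := {v : Fin k → Fin (N+1) // canon (fun j => ((v j : ℕ))) ∈ L}
    haveI : Fintype S := Fintype.ofFinite S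
    set n := Fintype.card S with hn
    let e : Fin n ≃ S := (Fintype.equivFin S).symm
    refine ⟨n, fun i j => {w | ∃ m, w = replicate m j ∧ min m N = (((e i).1 j : ℕ))}, ?_, ?_⟩
    · intro i j
      constructor
      · rintro w ⟨m, rfl, -⟩ x hx
        exact List.eq_of_mem_replicate hx
      · refine ⟨Fin (N+1), inferInstance,
          uCapDFA N {m | m = (((e i).1 j : ℕ))}, uCapDFA_aperiodic _ _, ?_⟩
        intro m
        rw [uCapDFA_accepts]
        constructor
        · rintro ⟨m', hrep, hmin⟩
          have : m' = m := by
            have := congrArg List.length hrep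
            simpa using this.symm
          subst this
          exact hmin
        · intro hmin
          exact ⟨m, rfl, hmin⟩
    · ext w
      erw [Set.mem_iUnion]
      have hsh : ∀ i : Fin n, w ∈ ShuffleList ((List.finRange k).map
          (fun j => {w | ∃ m, w = replicate m j ∧ min m N = (((e i).1 j : ℕ))})) ↔
          ∀ j : Fin k, ∃ m, replicate (w.count j) j = replicate m j
            ∧ min m N = (((e i).1 j : ℕ)) := by
        intro i
        erw [shuffleList_mem_iff _ _ (List.nodup_finRange k)
          (by rintro a - w' ⟨m, rfl, -⟩ x hx; exact List.eq_of_mem_replicate hx)]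
        constructor
        · rintro ⟨-, h2⟩
          exact fun j => h2 j (List.mem_finRange j)
        · intro h2
          exact ⟨fun x _ => List.mem_finRange x, fun j _ => h2 j⟩
      constructor
      · intro hw
        have hcanon : canon (fun j => min (w.count j) N) ∈ L :=
          (hcap _).mp ((hmemc w).mp hw)
        refine ⟨e.symm ⟨fun j => ⟨min (w.count j) N, by omega⟩, hcanon⟩, ?_⟩
        erw [hsh]
        intro j
        refine ⟨w.count j, rfl, ?_⟩
        have : e (e.symm ⟨fun j => ⟨min (w.count j) N, by omega⟩, hcanon⟩)
            = ⟨fun j => ⟨min (w.count j) N, by omega⟩, hcanon⟩ := e.apply_symm_apply _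
        rw [this]
      · rintro ⟨i, hi⟩
        erw [hsh] at hi
        have hvc : (fun j => (((e i).1 j : ℕ))) = fun j => min (w.count j) N := by
          funext j
          obtain ⟨m, hrep, hmin⟩ := hi j
          have : m = w.count j := by
            have := congrArg List.length hrep
            simpa using this.symm
          subst this
          exact hmin.symm
        have hc := (e i).2
        rw [hvc] at hc
        exact (hmemc w).mpr ((hcap _).mpr hc)
  · rintro ⟨n, U, hU, rfl⟩
    classical
    have hUl : ∀ (i : Fin n), ∀ a ∈ List.finRange k, ∀ w ∈ U i a, ∀ x ∈ w, x = a :=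
      fun i a _ => (hU i a).1
    have hmem : ∀ (w : List (Fin k)) (i : Fin n),
        w ∈ ShuffleList ((List.finRange k).map (U i)) ↔
        ∀ j : Fin k, replicate (w.count j) j ∈ U i j := by
      intro w i
      rw [shuffleList_mem_iff _ _ (List.nodup_finRange k) (hUl i)]
      constructor
      · rintro ⟨-, h2⟩; exact fun j => h2 j (List.mem_finRange j)
      · intro h2; exact ⟨fun x _ => List.mem_finRange x, fun j _ => h2 j⟩
    constructor
    · intro u v huv
      erw [Set.mem_iUnion, Set.mem_iUnion]
      constructor <;> rintro ⟨i, hi⟩ <;> refine ⟨i, ?_⟩ <;> erw [hmem] at hi ⊢ <;>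
        intro j
      · rw [← huv.count_eq j]; exact hi j
      · rw [huv.count_eq j]; exact hi j
    · choose t ht using fun (p : Fin n × Fin k) => unary_eventually_const (hU p.1 p.2)
      set T := Finset.univ.sup t with hT
      have hTt : ∀ p, t p ≤ T := fun p => Finset.le_sup (Finset.mem_univ p)
      refine ⟨Fin k → Fin (T+1), inferInstance,
        capDFA k T {c | ∃ i, ∀ j : Fin k, replicate (c j) j ∈ U i j},
        capDFA_aperiodic _ _ _, ?_⟩
      ext w
      rw [capDFA_accepts]; erw [Set.mem_iUnion]
      have hcongr : ∀ (i : Fin n) (j : Fin k),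
          replicate (min (w.count j) T) j ∈ U i j ↔ replicate (w.count j) j ∈ U i j := by
        intro i j
        rcases le_or_gt (w.count j) T with hle | hlt
        · rw [min_eq_left hle]
        · rw [min_eq_right (by omega)]
          have h1 := ht (i, j) T (hTt (i, j))
          have h2 := ht (i, j) (w.count j) (le_trans (hTt (i, j)) (by omega))
          rw [h1, h2]
      constructor
      · rintro ⟨i, hi⟩
        refine ⟨i, (hmem w i).mpr fun j => ?_⟩
        rw [← hcongr i j]
        exact hi j
      · rintro ⟨i, hi⟩
        erw [hmem] at hi
        exact ⟨i, fun j => (hcongr i j).mpr (hi j)⟩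
end
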